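/- Let z1, z2, z3 be pairwise distinct complex numbers with z1, z2 ∉ {0, 1}, and let c0, c1, c2, c3, c4 be complex numbers with c1 ∉ {1/4, −1/4} and c2 ∉ {1/4, −1/4}. Then the 4×4 matrix C(−1) (defined as in the context) is invertible. -/

import Mathlib

open Matrix

set_option maxHeartbeats 1000000 in
theorem my_det_blk {R : Type*} [CommRing R] (c d g h i j k l m n o p : R) :
    (!![(0:R),0,c,d; 0,0,g,h; i,j,k,l; m,n,o,p]).det = (c*h - d*g)*(i*n - j*m) := by
  simp [Matrix.det_succ_row_zero, Fin.sum_univ_succ, Fin.succAbove,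
    show ((1:Fin 4) < Fin.succ 2) from by decide,
    show ((2:Fin 4) < Fin.succ 2) from by decide,
    show Fin.castSucc (2:Fin 3) = (2:Fin 4) from rfl]
  ring

set_option maxHeartbeats 1000000 in
theorem Cm1_invertible (z1 z2 z3 c0 c1 c2 c3 c4 : ℂ)
    (h12 : z1 ≠ z2) (h13 : z1 ≠ z3) (h23 : z2 ≠ z3)
    (hz1_0 : z1 ≠ 0) (hz1_1 : z1 ≠ 1) (hz2_0 : z2 ≠ 0) (hz2_1 : z2 ≠ 1)
    (hc1p : c1 ≠ 1/4) (hc1m : c1 ≠ -(1/4)) (hc2p : c2 ≠ 1/4) (hc2m : c2 ≠ -(1/4)) :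
    IsUnit (!![0, 0,
        -((2/(z1-z2))*z1/((2*c1+1/2)*(z1-z3))),
        (2/(z1-z2))*z2/((2*c2+1/2)*(z2-z3));
        0, 0,
        -((2/(z1-z2))/((2*c1+1/2)*(z1-z3))),
        (2/(z1-z2))/((2*c2+1/2)*(z2-z3));
        -((2/(z1-z2))*z1/((2*c1-1/2)*(z1-z3))),
        -((2/(z1-z2))/((2*c1-1/2)*(z1-z3))),
        (2/(z1-z2))*(1-z1)*z1/((2*c1-1/2)*(2*c1+1/2)*(z1-z3))
          * ((2*c0-2*c1)/z1 + (2*c2+2*c1)/(z1-z2) + (2*c3+2*c1)/(z1-z3) + (2*c1+2*c4)/(z1-1)),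
        (2/(z1-z2))*(-1/(z1-z2))
          * (z1*(1-z2)/((2*c1-1/2)*(z1-z3)) + z2*(1-z1)/((2*c2+1/2)*(z2-z3)));
        (2/(z1-z2))*z2/((2*c2-1/2)*(z2-z3)),
        (2/(z1-z2))/((2*c2-1/2)*(z2-z3)),
        (2/(z1-z2))*(-1/(z1-z2))
          * (z1*(1-z2)/((2*c1+1/2)*(z1-z3)) + z2*(1-z1)/((2*c2-1/2)*(z2-z3))),
        -((2/(z1-z2))*(1-z2)*z2/((2*c2-1/2)*(2*c2+1/2)*(z2-z3)))
          * ((2*c0-2*c2)/z2 + (2*c1+2*c2)/(z2-z1) + (2*c3+2*c2)/(z2-z3) + (2*c2+2*c4)/(z2-1))]) := by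
  have ha' : (2*c1*2+1) ≠ 0 := fun h => hc1m (by linear_combination h/4)
  have hA' : (2*c1*2-1) ≠ 0 := fun h => hc1p (by linear_combination h/4)
  have hb' : (2*c2*2+1) ≠ 0 := fun h => hc2m (by linear_combination h/4)
  have hB' : (2*c2*2-1) ≠ 0 := fun h => hc2p (by linear_combination h/4)
  have h12' : z1 - z2 ≠ 0 := sub_ne_zero.mpr h12
  have h13' : z1 - z3 ≠ 0 := sub_ne_zero.mpr h13
  have h23' : z2 - z3 ≠ 0 := sub_ne_zero.mpr h23
  rw [Matrix.isUnit_iff_isUnit_det, isUnit_iff_ne_zero, my_det_blk]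
  apply mul_ne_zero
  · intro h
    rw [sub_eq_zero] at h
    field_simp at h
    have key : (z1 - z2) * ((z1 - z2) * ((z1 - z2) * ((2*c1*2+1) * ((2*c2*2+1)
        * ((z1 - z3) * ((z2 - z3) * 16)))))) = 0 := by
      have hD : (2^2*c1+1)*(2^2*c2+1) ≠ 0 :=
        mul_ne_zero (fun e => ha' (by linear_combination e)) (fun e => hb' (by linear_combination e))
      rw [neg_inj, div_left_inj' hD] at h
      rw [h]; ring
    exact (mul_ne_zero h12' (mul_ne_zero h12' (mul_ne_zero h12' (mul_ne_zero ha'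
      (mul_ne_zero hb' (mul_ne_zero h13' (mul_ne_zero h23' (by norm_num)))))))) key
  · intro h
    rw [sub_eq_zero] at h
    field_simp at h
    have hD : (2^2*c1-1)*(2^2*c2-1) ≠ 0 :=
      mul_ne_zero (fun e => hA' (by linear_combination e)) (fun e => hB' (by linear_combination e))
    exact h12 (by rwa [neg_inj, div_left_inj' hD] at h)
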